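/- There exists a primitive root g modulo 4231 such that the cosets X_i = g^i·H (0 ≤ i < 30, indices mod 30) of the subgroup H of 30th-power residues in 𝔽_4231^× form a 15-color Directed Ramsey algebra, i.e., with m = 15: (1) for all i, X_i + X_i = ⋃_{j ≠ i} X_j; (2) for all i, X_i + X_{i+15} = {0} ∪ ⋃_{j ∉ {i, i+15}} X_j; (3) for all i, j with i ≠ j and j ≠ i+15, X_i + X_j = 𝔽_4231 ∖ {0}. -/

import Mathlib

open Pointwise

/-- The set of nonzero `n`-th power residues in `𝔽_p = ZMod p`. -/
def Hpow (p n : ℕ) : Set (ZMod p) := {x | ∃ u : (ZMod p)ˣ, (u : ZMod p) ^ n = x}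

/-- The coset `X_i = g^i · H` of the subgroup of `n`-th power residues. -/
noncomputable def Xc (p n : ℕ) [Fact p.Prime] (g : ZMod p) (i : ℤ) : Set (ZMod p) :=
  g ^ i • Hpow p n

instance : Fact (Nat.Prime 4231) := ⟨by norm_num⟩


set_option exponentiation.threshold 10000


/-! ### Balanced boolean checker over ranges of naturals -/

def chkAux (f : ℕ → Bool) : ℕ → ℕ → Bool
  | 0, lo => f lo
  | d+1, lo => chkAux f d lo && chkAux f d (lo + 2^d)

theorem chkAux_spec (f : ℕ → Bool) : ∀ d lo i, i < 2^d → chkAux f d lo = true → f (lo + i) = true := by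
  intro d
  induction d with
  | zero => intro lo i hi h; interval_cases i; exact h
  | succ d ih =>
    intro lo i hi h
    rw [chkAux, Bool.and_eq_true] at h
    rcases lt_or_ge i (2^d) with h1 | h1
    · exact ih lo i h1 h.1
    · have hp : 2^(d+1) = 2^d + 2^d := by rw [pow_succ]; omega
      have h2 : i - 2^d < 2^d := by omega
      have h3 := ih (lo + 2^d) (i - 2^d) h2 h.2
      have h4 : lo + 2^d + (i - 2^d) = lo + i := by omega
      rwa [h4] at h3

theorem chk_all (f : ℕ → Bool) (h : chkAux f 13 0 = true) : ∀ i, i < 4231 → f i = true := by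
  intro i hi
  have := chkAux_spec f 13 0 i (by omega) h
  simpa using this

/-! ### Finite facts -/

def fA (x : ℕ) : Bool :=
  decide (4231 ≤ x ∨ (x^141 % 4231 = 1 → x ≠ 4230 ∧ (x+1)^141 % 4231 ≠ 1))

theorem factA : ∀ x, x < 4231 → x^141 % 4231 = 1 → x ≠ 4230 ∧ (x+1)^141 % 4231 ≠ 1 := by
  have h : chkAux fA 13 0 = true := by decide
  intro x hx
  have := chk_all fA h x hx
  rw [fA, decide_eq_true_eq] at this
  exact this.resolve_left (by omega)

def fB (x : ℕ) : Bool :=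
  decide (4231 ≤ x ∨ (x^141 % 4231 = 4230 → x = 4230 ∨
    ((x+1)^141 % 4231 ≠ 1 ∧ (x+1)^141 % 4231 ≠ 4230)))

theorem factB : ∀ x, x < 4231 → x^141 % 4231 = 4230 → x = 4230 ∨
    ((x+1)^141 % 4231 ≠ 1 ∧ (x+1)^141 % 4231 ≠ 4230) := by
  have h : chkAux fB 13 0 = true := by decide
  intro x hx
  have := chk_all fB h x hx
  rw [fB, decide_eq_true_eq] at this
  exact this.resolve_left (by omega)

def Wrows : List (List ℕ) := [
  [1, 1210, 2542, 868, 1545, 1842, 531, 306, 44, 113, 126, 3286, 1404, 144, 477, 429, 1249, 107, 174, 90, 769, 1168, 1, 284, 1514, 2143, 554, 579, 827, 823],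
  [991, 378, 499, 2084, 2190, 2072, 379, 3145, 1201, 2275, 321, 1480, 163, 2512, 3, 270, 316, 517, 1087, 1837, 311, 1977, 132, 2198, 522, 172, 339, 228, 439, 262],
  [1017, 516, 121, 460, 700, 209, 2458, 1349, 62, 845, 489, 73, 548, 254, 695, 361, 500, 1137, 1372, 734, 963, 736, 1317, 502, 644, 933, 396, 479, 9, 122],
  [2100, 1932, 1111, 363, 1506, 884, 219, 1145, 364, 157, 366, 1919, 762, 388, 373, 461, 1443, 422, 1321, 457, 27, 1378, 186, 148, 1467, 817, 409, 416, 2358, 467],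
  [112, 227, 780, 472, 80, 444, 413, 50, 701, 691, 3391, 3071, 2069, 657, 265, 46, 70, 2969, 98, 1618, 81, 328, 238, 1744, 1003, 295, 941, 1766, 1739, 787],
  [1113, 1976, 1316, 26, 294, 293, 240, 2692, 510, 1132, 1189, 210, 623, 407, 778, 1413, 2369, 464, 199, 795, 67, 984, 336, 807, 243, 2999, 138, 1332, 384, 445],
  [729, 3913, 8, 3985, 3201, 2655, 7, 859, 281, 201, 1218, 380, 882, 565, 109, 1937, 1609, 78, 870, 220, 879, 352, 2043, 5, 17, 1339, 1381, 630, 401, 720],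
  [2003, 924, 547, 2244, 327, 815, 307, 723, 21, 1532, 603, 334, 24, 1898, 359, 166, 1242, 1580, 1695, 724, 1890, 234, 94, 394, 542, 838, 223, 51, 15, 29],
  [3220, 310, 72, 365, 45, 509, 2580, 1202, 1270, 1236, 605, 2057, 22, 1788, 38, 3500, 634, 1054, 277, 981, 1077, 282, 87, 757, 854, 921, 847, 1980, 610, 142],
  [740, 131, 459, 1533, 2285, 66, 2080, 1957, 86, 1487, 647, 698, 135, 202, 189, 1237, 216, 3022, 114, 1820, 1527, 2548, 1198, 3376, 692, 831, 2516, 2631, 930, 158],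
  [368, 850, 61, 1377, 127, 198, 400, 233, 556, 784, 250, 1025, 1325, 1345, 648, 2076, 350, 1357, 342, 1666, 31, 1278, 251, 230, 1471, 258, 896, 490, 274, 1816],
  [822, 1200, 208, 2051, 690, 335, 381, 93, 1777, 130, 1470, 182, 211, 74, 1465, 862, 1964, 743, 183, 1944, 194, 1489, 533, 1701, 1668, 1104, 1393, 587, 1215, 2524],
  [1753, 1661, 754, 883, 49, 25, 1529, 23, 633, 85, 3303, 773, 545, 119, 582, 911, 35, 56, 136, 64, 549, 872, 179, 164, 624, 1874, 974, 1405, 40, 1205],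
  [75, 2473, 120, 147, 69, 1970, 1391, 541, 1328, 830, 232, 593, 389, 356, 1746, 572, 2735, 1052, 1553, 666, 105, 203, 2018, 706, 145, 636, 168, 3467, 13, 192],
  [266, 315, 360, 1071, 696, 3577, 4, 1531, 583, 646, 2119, 207, 39, 191, 190, 674, 154, 649, 1949, 374, 110, 1410, 225, 504, 1068, 2414, 1706, 452, 2170, 176],
  [1, 912, 979, 362, 271, 806, 790, 602, 1462, 1102, 197, 688, 1305, 12, 206, 1, 570, 1516, 638, 430, 117, 83, 1244, 621, 528, 298, 573, 419, 1763, 47],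
  [305, 990, 488, 1918, 1370, 292, 351, 842, 71, 1255, 249, 4068, 2800, 571, 427, 11, 248, 591, 894, 36, 19, 317, 953, 618, 2033, 484, 2418, 813, 155, 1719],
  [43, 521, 465, 1187, 79, 346, 108, 1055, 876, 1851, 349, 915, 910, 592, 1678, 651, 1289, 598, 951, 599, 662, 1517, 213, 3048, 3097, 628, 518, 1019, 33, 57],
  [125, 171, 1563, 761, 237, 137, 200, 595, 1076, 425, 392, 129, 278, 829, 175, 1047, 952, 2507, 302, 512, 803, 115, 1986, 343, 1148, 184, 99, 448, 2731, 1060],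
  [796, 431, 735, 387, 97, 711, 1151, 411, 37, 65, 1344, 1417, 221, 104, 709, 297, 483, 345, 2724, 1014, 960, 375, 857, 552, 1619, 725, 91, 4181, 3760, 667],
  [106, 377, 2727, 626, 111, 964, 955, 20, 433, 739, 273, 1449, 118, 68, 1907, 82, 291, 32, 1109, 3786, 1124, 663, 2497, 550, 804, 1870, 195, 506, 312, 653],
  [283, 892, 799, 415, 204, 985, 1846, 333, 2168, 1299, 60, 2549, 84, 1169, 673, 116, 526, 1273, 819, 96, 376, 353, 354, 318, 494, 1648, 1878, 585, 664, 246],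
  [1403, 2, 733, 2676, 226, 239, 77, 2019, 152, 1128, 849, 1199, 55, 355, 2397, 612, 1085, 348, 323, 1578, 738, 95, 3027, 180, 999, 568, 1158, 133, 252, 88],
  [553, 403, 395, 456, 264, 149, 6, 165, 756, 215, 399, 181, 632, 231, 503, 1826, 2588, 969, 301, 103, 505, 285, 998, 1730, 977, 642, 2453, 811, 561, 717],
  [1209, 2274, 932, 421, 1247, 242, 855, 722, 309, 1197, 685, 2034, 1004, 146, 575, 418, 18, 875, 124, 959, 625, 1896, 1127, 523, 957, 3446, 529, 693, 1069, 1319],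
  [173, 438, 643, 185, 1738, 463, 629, 1725, 946, 2079, 1587, 2348, 1607, 1634, 314, 569, 726, 520, 679, 296, 1123, 818, 54, 325, 1367, 1340, 776, 299, 934, 331],
  [476, 162, 1885, 1397, 169, 777, 1365, 2203, 975, 2006, 341, 92, 544, 1560, 224, 196, 140, 100, 160, 410, 1574, 2639, 151, 716, 574, 454, 139, 397, 538, 256],
  [768, 1430, 480, 2264, 1765, 1081, 449, 814, 276, 134, 229, 586, 1406, 491, 1020, 2226, 812, 1502, 1483, 1175, 486, 580, 1362, 300, 417, 1767, 453, 1556, 52, 1191],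
  [1893, 3394, 253, 156, 900, 1673, 16, 14, 1804, 1195, 1359, 1216, 34, 665, 440, 687, 10, 1712, 760, 482, 3479, 59, 611, 402, 931, 53, 475, 275, 1194, 41],
  [89, 1676, 515, 1320, 1617, 614, 3557, 923, 668, 188, 30, 193, 48, 1446, 1425, 654, 247, 42, 1075, 905, 1448, 177, 718, 102, 123, 745, 159, 2752, 58, 824]
]

def Wfn (d c : ℕ) : ℕ := (Wrows.getD d []).getD c 1

def fC (n : ℕ) : Bool :=
  decide (900 ≤ n ∨ (n/30 = 0 ∧ n%30 = 0) ∨ (n/30 = 15 ∧ (n%30 = 0 ∨ n%30 = 15)) ∨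
    ((Wfn (n/30) (n%30))^141 % 4231 = 283^(n/30) % 4231 ∧
     (Wfn (n/30) (n%30) + 1)^141 % 4231 = 283^(n%30) % 4231))

theorem chk_all10 (f : ℕ → Bool) (h : chkAux f 10 0 = true) : ∀ i, i < 1024 → f i = true := by
  intro i hi
  have := chkAux_spec f 10 0 i (by omega) h
  simpa using this

theorem factC : ∀ d c, d < 30 → c < 30 → ¬(d = 0 ∧ c = 0) → ¬(d = 15 ∧ (c = 0 ∨ c = 15)) →
    (Wfn d c)^141 % 4231 = 283^d % 4231 ∧ (Wfn d c + 1)^141 % 4231 = 283^c % 4231 := by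
  have h : chkAux fC 10 0 = true := by set_option maxRecDepth 20000 in decide
  intro d c hd hc h1 h2
  have hn : d * 30 + c < 1024 := by omega
  have := chk_all10 fC h (d * 30 + c) hn
  rw [fC, decide_eq_true_eq] at this
  have hdiv : (d * 30 + c) / 30 = d := by omega
  have hmod : (d * 30 + c) % 30 = c := by omega
  rw [hdiv, hmod] at this
  rcases this with h' | h' | h' | h'
  · omega
  · exact absurd h' h1
  · exact absurd h' h2
  · exact h'

namespace DR

abbrev F := ZMod 4231

noncomputable def gF : F := ((3 : ℕ) : F)
noncomputable def hF : F := ((283 : ℕ) : F)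

lemma pcast {x e r : ℕ} (hx : x ^ e % 4231 = r) : ((x : ℕ) : F) ^ e = ((r : ℕ) : F) := by
  rw [← hx, ZMod.natCast_mod, Nat.cast_pow]

lemma castne {a b : ℕ} (h : ¬ (a % 4231 = b % 4231)) : ((a : ℕ) : F) ≠ ((b : ℕ) : F) :=
  fun he => h ((ZMod.natCast_eq_natCast_iff' a b 4231).mp he)

lemma g_ne : gF ≠ 0 := by
  rw [gF, Ne, ZMod.natCast_eq_zero_iff]; norm_num

lemma h_ne : hF ≠ 0 := by
  rw [hF, Ne, ZMod.natCast_eq_zero_iff]; norm_num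

lemma primes4230 : ∀ q : ℕ, q.Prime → q ∣ 4230 → q = 2 ∨ q = 3 ∨ q = 5 ∨ q = 47 := by
  intro q hq hdvd
  have h2 : (4230 : ℕ) = 2 * (3 * (3 * (5 * 47))) := by norm_num
  rw [h2] at hdvd
  rcases (Nat.Prime.dvd_mul hq).mp hdvd with h | h
  · exact Or.inl ((Nat.prime_dvd_prime_iff_eq hq (by norm_num)).mp h)
  rcases (Nat.Prime.dvd_mul hq).mp h with h | h
  · exact Or.inr (Or.inl ((Nat.prime_dvd_prime_iff_eq hq (by norm_num)).mp h))
  rcases (Nat.Prime.dvd_mul hq).mp h with h | h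
  · exact Or.inr (Or.inl ((Nat.prime_dvd_prime_iff_eq hq (by norm_num)).mp h))
  rcases (Nat.Prime.dvd_mul hq).mp h with h | h
  · exact Or.inr (Or.inr (Or.inl ((Nat.prime_dvd_prime_iff_eq hq (by norm_num)).mp h)))
  · exact Or.inr (Or.inr (Or.inr ((Nat.prime_dvd_prime_iff_eq hq (by norm_num)).mp h)))

lemma primes30 : ∀ q : ℕ, q.Prime → q ∣ 30 → q = 2 ∨ q = 3 ∨ q = 5 := by
  intro q hq hdvd
  have h2 : (30 : ℕ) = 2 * (3 * 5) := by norm_num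
  rw [h2] at hdvd
  rcases (Nat.Prime.dvd_mul hq).mp hdvd with h | h
  · exact Or.inl ((Nat.prime_dvd_prime_iff_eq hq (by norm_num)).mp h)
  rcases (Nat.Prime.dvd_mul hq).mp h with h | h
  · exact Or.inr (Or.inl ((Nat.prime_dvd_prime_iff_eq hq (by norm_num)).mp h))
  · exact Or.inr (Or.inr ((Nat.prime_dvd_prime_iff_eq hq (by norm_num)).mp h))

lemma ord_g : orderOf gF = 4230 := by
  apply orderOf_eq_of_pow_and_pow_div_prime (by norm_num)
  · rw [gF, pcast (show 3 ^ 4230 % 4231 = 1 by decide), Nat.cast_one]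
  · intro q hq hdvd
    rcases primes4230 q hq hdvd with rfl | rfl | rfl | rfl
    · rw [show (4230 / 2 : ℕ) = 2115 by norm_num, gF,
        pcast (show 3 ^ 2115 % 4231 = 4230 by decide), ← Nat.cast_one (R := F)]
      exact castne (by norm_num)
    · rw [show (4230 / 3 : ℕ) = 1410 by norm_num, gF,
        pcast (show 3 ^ 1410 % 4231 = 3610 by decide), ← Nat.cast_one (R := F)]
      exact castne (by norm_num)
    · rw [show (4230 / 5 : ℕ) = 846 by norm_num, gF,
        pcast (show 3 ^ 846 % 4231 = 2242 by decide), ← Nat.cast_one (R := F)]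
      exact castne (by norm_num)
    · rw [show (4230 / 47 : ℕ) = 90 by norm_num, gF,
        pcast (show 3 ^ 90 % 4231 = 554 by decide), ← Nat.cast_one (R := F)]
      exact castne (by norm_num)

lemma ord_h : orderOf hF = 30 := by
  apply orderOf_eq_of_pow_and_pow_div_prime (by norm_num)
  · rw [hF, pcast (show 283 ^ 30 % 4231 = 1 by decide), Nat.cast_one]
  · intro q hq hdvd
    rcases primes30 q hq hdvd with rfl | rfl | rfl
    · rw [show (30 / 2 : ℕ) = 15 by norm_num, hF,
        pcast (show 283 ^ 15 % 4231 = 4230 by decide), ← Nat.cast_one (R := F)]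
      exact castne (by norm_num)
    · rw [show (30 / 3 : ℕ) = 10 by norm_num, hF,
        pcast (show 283 ^ 10 % 4231 = 3610 by decide), ← Nat.cast_one (R := F)]
      exact castne (by norm_num)
    · rw [show (30 / 5 : ℕ) = 6 by norm_num, hF,
        pcast (show 283 ^ 6 % 4231 = 2242 by decide), ← Nat.cast_one (R := F)]
      exact castne (by norm_num)

lemma hpr : IsPrimitiveRoot gF 4230 := ord_g ▸ IsPrimitiveRoot.orderOf gF

lemma hgh : gF ^ (141 : ℕ) = hF := by
  rw [gF, pcast (show 3 ^ 141 % 4231 = 283 by decide)]; rfl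

lemma exists_pow : ∀ x : F, x ≠ 0 → ∃ t : ℕ, gF ^ t = x := by
  intro x hx
  set gu : Fˣ := Units.mk0 gF g_ne with hgu
  have hog : orderOf gu = 4230 := by rw [← orderOf_units]; exact ord_g
  have hcard : Fintype.card Fˣ = 4230 := by rw [ZMod.card_units 4231]
  have htop : Subgroup.zpowers gu = ⊤ := by
    apply Subgroup.eq_top_of_card_eq
    rw [Nat.card_eq_fintype_card, Nat.card_eq_fintype_card, Fintype.card_zpowers, hog, hcard]
  have hmem : (Units.mk0 x hx) ∈ Subgroup.zpowers gu := htop ▸ Subgroup.mem_top _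
  obtain ⟨k, hk⟩ := Subgroup.mem_zpowers_iff.mp hmem
  refine ⟨(k % 4230).toNat, ?_⟩
  have hk2 : gu ^ (((k % 4230).toNat : ℤ)) = gu ^ k := by
    rw [zpow_eq_zpow_iff_modEq, hog]
    have h1 : ((k % 4230).toNat : ℤ) = k % 4230 :=
      Int.toNat_of_nonneg (Int.emod_nonneg k (by norm_num))
    rw [h1]
    show k % 4230 % 4230 = k % 4230
    exact Int.emod_emod_of_dvd _ dvd_rfl
  have h3 : gu ^ ((k % 4230).toNat) = Units.mk0 x hx := by
    rw [← zpow_natCast, hk2, hk]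
  have h4 := congrArg (Units.val) h3
  rw [Units.val_pow_eq_pow_val] at h4
  simpa [hgu] using h4

lemma Hpow_char : Hpow 4231 30 = {x : F | x ≠ 0 ∧ x ^ 141 = 1} := by
  ext x
  constructor
  · rintro ⟨u, rfl⟩
    refine ⟨pow_ne_zero _ (Units.ne_zero u), ?_⟩
    rw [← pow_mul]
    have h1 : ((u : F)) ^ (4231 - 1) = 1 := ZMod.pow_card_sub_one_eq_one (Units.ne_zero u)
    norm_num at h1
    rw [show (30 * 141 : ℕ) = 4230 by norm_num]
    exact h1
  · rintro ⟨hx, h141⟩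
    obtain ⟨t, rfl⟩ := exists_pow x hx
    have h1 : gF ^ (t * 141) = 1 := by rw [pow_mul]; exact h141
    have hdv : 4230 ∣ t * 141 := by rw [← ord_g]; exact orderOf_dvd_of_pow_eq_one h1
    obtain ⟨m, hm⟩ := hdv
    have ht : t = 30 * m := by omega
    exact ⟨Units.mk0 (gF ^ m) (pow_ne_zero _ g_ne), by
      show ((gF ^ m : F)) ^ 30 = gF ^ t
      rw [← pow_mul, ht, mul_comm]⟩

lemma gpow141 (i : ℤ) : (gF ^ i) ^ (141 : ℕ) = hF ^ i := by
  rw [← zpow_natCast (gF ^ i), ← zpow_mul, mul_comm, zpow_mul, zpow_natCast, hgh]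

lemma Xc_mem (i : ℤ) (z : F) : z ∈ Xc 4231 30 gF i ↔ z ≠ 0 ∧ z ^ 141 = hF ^ i := by
  rw [Xc, Hpow_char]
  constructor
  · intro hz
    obtain ⟨y, hy, rfl⟩ := Set.mem_smul_set.mp hz
    obtain ⟨hy0, hy141⟩ := hy
    refine ⟨?_, ?_⟩
    · rw [smul_eq_mul]; exact mul_ne_zero (zpow_ne_zero _ g_ne) hy0
    · rw [smul_eq_mul, mul_pow, hy141, mul_one, gpow141]
  · rintro ⟨hz, hz141⟩
    refine Set.mem_smul_set.mpr ⟨gF ^ (-i) * z, ⟨?_, ?_⟩, ?_⟩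
    · exact mul_ne_zero (zpow_ne_zero _ g_ne) hz
    · rw [mul_pow, hz141, gpow141, ← zpow_add₀ h_ne, neg_add_cancel, zpow_zero]
    · rw [smul_eq_mul, ← mul_assoc, ← zpow_add₀ g_ne, add_neg_cancel, zpow_zero, one_mul]

lemma hcls (i j : ℤ) : hF ^ i = hF ^ j ↔ ((i : ZMod 30) = (j : ZMod 30)) := by
  set hu : Fˣ := Units.mk0 hF h_ne with hhu
  have hou : orderOf hu = 30 := by rw [← orderOf_units]; exact ord_h
  have hval : ∀ k : ℤ, hF ^ k = ((hu ^ k : Fˣ) : F) := fun k =>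
    (Units.val_zpow_eq_zpow_val hu k).symm
  rw [hval i, hval j]
  rw [← Units.ext_iff, zpow_eq_zpow_iff_modEq, hou]
  exact (ZMod.intCast_eq_intCast_iff i j 30).symm

lemma hpow_nat (c : ℕ) : hF ^ ((c : ℕ) : ℤ) = ((283 ^ c % 4231 : ℕ) : F) := by
  rw [zpow_natCast, hF, pcast rfl]

lemma valcast (z : F) : ((z.val : ℕ) : F) = z := ZMod.natCast_rightInverse z

lemma pow_val (z : F) (r : ℕ) : z ^ 141 = ((r : ℕ) : F) ↔ z.val ^ 141 % 4231 = r % 4231 := by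
  conv_lhs => rw [← valcast z, pcast (rfl : z.val ^ 141 % 4231 = _)]
  rw [ZMod.natCast_eq_natCast_iff']
  constructor <;> intro h <;> omega

lemma class_total (z : F) (hz : z ≠ 0) : ∃ t : ℕ, z ^ 141 = hF ^ ((t : ℕ) : ℤ) := by
  obtain ⟨t, rfl⟩ := exists_pow z hz
  exact ⟨t, by rw [← pow_mul, mul_comm, pow_mul, hgh, zpow_natCast]⟩

end DR

namespace DR

lemma natpow_eq {a r : ℕ} (h : a ^ 141 % 4231 = r % 4231) :
    ((a : ℕ) : F) ^ 141 = ((r : ℕ) : F) := by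
  rw [pcast (rfl : a ^ 141 % 4231 = _)]
  exact (ZMod.natCast_eq_natCast_iff' _ _ _).mpr (by omega)

lemma natpow_ne {a r : ℕ} (h : a ^ 141 % 4231 ≠ r % 4231) :
    ((a : ℕ) : F) ^ 141 ≠ ((r : ℕ) : F) := by
  rw [pcast (rfl : a ^ 141 % 4231 = _)]
  exact castne (by omega)

lemma h15 : hF ^ (15 : ℤ) = ((4230 : ℕ) : F) := by
  have h1 := hpow_nat 15
  have h2 : (283 ^ 15 % 4231 : ℕ) = 4230 := by norm_num
  rw [h2] at h1
  rw [show (15 : ℤ) = ((15 : ℕ) : ℤ) by norm_num]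
  exact h1

lemma n1_ne : ((4230 : ℕ) : F) ≠ 0 := by
  rw [Ne, ZMod.natCast_eq_zero_iff]; norm_num

lemma n1_neg : ((4230 : ℕ) : F) = -1 := by
  have h0 : ((4231 : ℕ) : F) = 0 := ZMod.natCast_self 4231
  have h1 : ((4230 : ℕ) : F) + 1 = ((4231 : ℕ) : F) := by push_cast; ring
  exact eq_neg_of_add_eq_zero_left (h1.trans h0)

lemma shift15 (i : ℤ) : (i : ZMod 30) ≠ ((i + 15 : ℤ) : ZMod 30) := by
  push_cast
  intro h
  have h2 : (15 : ZMod 30) = 0 := (left_eq_add.mp h).symm ▸ rfl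
  rw [left_eq_add] at h
  exact absurd h (by decide)

lemma val15 (x : ZMod 30) : x.val = 15 ↔ x = (15 : ZMod 30) := by
  constructor
  · intro h
    have h1 := ZMod.natCast_rightInverse x
    rw [h] at h1
    rw [← h1]; norm_cast
  · intro h; rw [h]; decide

lemma val_z (x : ZMod 30) : x.val = 0 ↔ x = 0 := ZMod.val_eq_zero x

lemma ratio_pow {i j : ℤ} {x y : F} (hx0 : x ≠ 0) (hx : x ^ 141 = hF ^ i)
    (hy : y ^ 141 = hF ^ j) : (x⁻¹ * y) ^ 141 = hF ^ (j - i) := by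
  rw [mul_pow, inv_pow, hx, hy, ← zpow_neg, ← zpow_add₀ h_ne, neg_add_eq_sub]

lemma sum_factor {x y : F} (hx0 : x ≠ 0) : x + y = x * (1 + x⁻¹ * y) := by
  field_simp

/-- The key coverage lemma. -/
lemma cover (i j t : ℤ) (z : F) (hz : z ≠ 0) (hzt : z ^ 141 = hF ^ t)
    (hcond1 : ¬((j : ZMod 30) = (i : ZMod 30) ∧ (t : ZMod 30) = (i : ZMod 30)))
    (hcond2 : ¬((j : ZMod 30) = ((i + 15 : ℤ) : ZMod 30) ∧
      ((t : ZMod 30) = (i : ZMod 30) ∨ (t : ZMod 30) = ((i + 15 : ℤ) : ZMod 30)))) :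
    z ∈ Xc 4231 30 gF i + Xc 4231 30 gF j := by
  have hJI : ((j - i : ℤ) : ZMod 30) = (j : ZMod 30) - (i : ZMod 30) := by push_cast; ring
  have hTI : ((t - i : ℤ) : ZMod 30) = (t : ZMod 30) - (i : ZMod 30) := by push_cast; ring
  have hI15 : ((i + 15 : ℤ) : ZMod 30) = (i : ZMod 30) + 15 := by push_cast; ring
  set d : ℕ := ((j - i : ℤ) : ZMod 30).val with hd
  set c : ℕ := ((t - i : ℤ) : ZMod 30).val with hc
  have hd30 : d < 30 := ZMod.val_lt _
  have hc30 : c < 30 := ZMod.val_lt _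
  have hdcast : ((d : ℕ) : ZMod 30) = (j : ZMod 30) - (i : ZMod 30) := by
    rw [hd, ZMod.natCast_rightInverse _, hJI]
  have hccast : ((c : ℕ) : ZMod 30) = (t : ZMod 30) - (i : ZMod 30) := by
    rw [hc, ZMod.natCast_rightInverse _, hTI]
  have hdz : d = 0 ↔ (j : ZMod 30) = (i : ZMod 30) := by
    rw [hd, val_z, hJI, sub_eq_zero]
  have hcz : c = 0 ↔ (t : ZMod 30) = (i : ZMod 30) := by
    rw [hc, val_z, hTI, sub_eq_zero]
  have hd15 : d = 15 ↔ (j : ZMod 30) = ((i + 15 : ℤ) : ZMod 30) := by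
    rw [hd, val15, hJI, sub_eq_iff_eq_add, hI15, add_comm (i : ZMod 30) 15]
  have hc15 : c = 15 ↔ (t : ZMod 30) = ((i + 15 : ℤ) : ZMod 30) := by
    rw [hc, val15, hTI, sub_eq_iff_eq_add, hI15, add_comm (i : ZMod 30) 15]
  obtain ⟨hw1, hw2⟩ := factC d c hd30 hc30
    (by rw [hdz, hcz]; exact hcond1)
    (by rw [hd15, hcz, hc15]; exact hcond2)
  set wN : ℕ := Wfn d c with hwN
  set w : F := ((wN : ℕ) : F) with hw
  have hwpow : w ^ 141 = hF ^ ((d : ℕ) : ℤ) := (pcast hw1).trans (hpow_nat d).symm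
  have hecast : (1 : F) + w = ((wN + 1 : ℕ) : F) := by rw [hw]; push_cast; ring
  have hepow : ((1 : F) + w) ^ 141 = hF ^ ((c : ℕ) : ℤ) := by
    rw [hecast]; exact (pcast hw2).trans (hpow_nat c).symm
  have hw0 : w ≠ 0 := by
    intro h0
    rw [h0, zero_pow (by norm_num : (141 : ℕ) ≠ 0)] at hwpow
    exact zpow_ne_zero _ h_ne hwpow.symm
  have he0 : (1 : F) + w ≠ 0 := by
    intro h0
    rw [h0, zero_pow (by norm_num : (141 : ℕ) ≠ 0)] at hepow
    exact zpow_ne_zero _ h_ne hepow.symm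
  set s : F := z * (gF ^ i * ((1 : F) + w))⁻¹ with hs
  have hs0 : s ≠ 0 :=
    mul_ne_zero hz (inv_ne_zero (mul_ne_zero (zpow_ne_zero _ g_ne) he0))
  have hs141 : s ^ 141 = 1 := by
    have h1 : s ^ 141 = hF ^ (t - (i + (c : ℕ))) := by
      rw [hs, mul_pow, inv_pow, mul_pow, gpow141, hepow, hzt, ← zpow_add₀ h_ne,
        ← zpow_neg, ← zpow_add₀ h_ne, ← sub_eq_add_neg]
    rw [h1, show (1 : F) = hF ^ (0 : ℤ) from (zpow_zero hF).symm, hcls]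
    push_cast
    push_cast at hccast
    rw [hccast]
    ring
  have hxmem : gF ^ i * s ∈ Xc 4231 30 gF i := (Xc_mem i _).mpr
    ⟨mul_ne_zero (zpow_ne_zero _ g_ne) hs0, by rw [mul_pow, gpow141, hs141, mul_one]⟩
  have hymem : gF ^ i * (w * s) ∈ Xc 4231 30 gF j := by
    refine (Xc_mem j _).mpr ⟨mul_ne_zero (zpow_ne_zero _ g_ne) (mul_ne_zero hw0 hs0), ?_⟩
    rw [mul_pow, mul_pow, gpow141, hwpow, hs141, mul_one, ← zpow_add₀ h_ne, hcls]
    push_cast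
    push_cast at hdcast
    rw [hdcast]
    ring
  have hsum2 : gF ^ i * s + gF ^ i * (w * s) = z := by
    have h2 : gF ^ i * s + gF ^ i * (w * s) = (gF ^ i * ((1 : F) + w)) * s := by ring
    rw [h2, hs]
    rw [mul_comm z, ← mul_assoc, mul_inv_cancel₀ (mul_ne_zero (zpow_ne_zero _ g_ne) he0), one_mul]
  exact hsum2 ▸ Set.add_mem_add hxmem hymem

end DR

namespace DR

lemma one_add_cast (w : F) : (1 : F) + w = ((w.val + 1 : ℕ) : F) := by
  push_cast
  rw [valcast]
  ring

lemma he0_of_ne (w : F) (hne : w.val ≠ 4230) : (1 : F) + w ≠ 0 := by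
  rw [one_add_cast, Ne, ZMod.natCast_eq_zero_iff]
  rintro ⟨k, hk⟩
  have hlt := ZMod.val_lt w
  omega

lemma cancel_pow {i : ℤ} {a b : F} (h : hF ^ i * a = hF ^ i * b) : a = b :=
  mul_left_cancel₀ (zpow_ne_zero i h_ne) h

end DR

open DR in
theorem stmt_14' : ∃ g : ZMod 4231, IsPrimitiveRoot g 4230 ∧
    (∀ i : ℤ, Xc 4231 30 g i + Xc 4231 30 g i =
      ⋃ j ∈ {j : ℤ | (j : ZMod 30) ≠ (i : ZMod 30)}, Xc 4231 30 g j) ∧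
    (∀ i : ℤ, Xc 4231 30 g i + Xc 4231 30 g (i + 15) =
      {(0 : ZMod 4231)} ∪ ⋃ j ∈ {j : ℤ | (j : ZMod 30) ≠ (i : ZMod 30) ∧
        (j : ZMod 30) ≠ ((i + 15 : ℤ) : ZMod 30)}, Xc 4231 30 g j) ∧
    (∀ i j : ℤ, (j : ZMod 30) ≠ (i : ZMod 30) → (j : ZMod 30) ≠ ((i + 15 : ℤ) : ZMod 30) →
      Xc 4231 30 g i + Xc 4231 30 g j = {(0 : ZMod 4231)}ᶜ) := by
  refine ⟨gF, hpr, ?_, ?_, ?_⟩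
  · -- Goal 1
    intro i
    ext z
    simp only [Set.mem_iUnion, Set.mem_setOf_eq, exists_prop]
    constructor
    · intro hz
      obtain ⟨x, hx, y, hy, rfl⟩ := Set.mem_add.mp hz
      obtain ⟨hx0, hx141⟩ := (Xc_mem i x).mp hx
      obtain ⟨hy0, hy141⟩ := (Xc_mem i y).mp hy
      have hw141 : (x⁻¹ * y) ^ 141 = hF ^ (i - i) := ratio_pow hx0 hx141 hy141
      rw [sub_self, zpow_zero] at hw141
      set w := x⁻¹ * y with hwdef
      have hwv : w.val ^ 141 % 4231 = 1 := by
        have := (pow_val w 1).mp (by rw [Nat.cast_one]; exact hw141)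
        omega
      obtain ⟨hne4230, hne1⟩ := factA w.val (ZMod.val_lt w) hwv
      have he0 : (1 : F) + w ≠ 0 := he0_of_ne w hne4230
      have he141 : ((1 : F) + w) ^ 141 ≠ 1 := by
        rw [one_add_cast, ← Nat.cast_one (R := F)]
        exact natpow_ne (by omega)
      have hsum : x + y = x * (1 + w) := sum_factor hx0
      have hz0 : x + y ≠ 0 := by rw [hsum]; exact mul_ne_zero hx0 he0
      obtain ⟨t, ht⟩ := class_total _ hz0
      refine ⟨(t : ℤ), ?_, (Xc_mem _ _).mpr ⟨hz0, ht⟩⟩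
      intro heq
      have h1 : hF ^ ((t : ℕ) : ℤ) = hF ^ i := (hcls _ _).mpr heq
      have h2 : hF ^ i * ((1 + w)) ^ 141 = hF ^ i * 1 := by
        calc hF ^ i * ((1 + w)) ^ 141 = x ^ 141 * ((1 + w)) ^ 141 := by rw [hx141]
          _ = (x + y) ^ 141 := by rw [← mul_pow, ← hsum]
          _ = hF ^ i * 1 := by rw [ht, h1, mul_one]
      exact he141 (cancel_pow h2)
    · rintro ⟨j', hj', hzj⟩
      obtain ⟨hz0, hz141⟩ := (Xc_mem j' z).mp hzj
      exact cover i i j' z hz0 hz141 (fun h => hj' h.2) (fun h => shift15 i h.1)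
  · -- Goal 2
    intro i
    ext z
    simp only [Set.mem_union, Set.mem_singleton_iff, Set.mem_iUnion, Set.mem_setOf_eq,
      exists_prop]
    constructor
    · intro hz
      obtain ⟨x, hx, y, hy, rfl⟩ := Set.mem_add.mp hz
      obtain ⟨hx0, hx141⟩ := (Xc_mem _ x).mp hx
      obtain ⟨hy0, hy141⟩ := (Xc_mem _ y).mp hy
      have hw141 : (x⁻¹ * y) ^ 141 = hF ^ ((i + 15) - i) := ratio_pow hx0 hx141 hy141
      rw [show (i + 15) - i = (15 : ℤ) by ring, h15] at hw141
      set w := x⁻¹ * y with hwdef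
      have hwv : w.val ^ 141 % 4231 = 4230 := by
        have := (pow_val w 4230).mp hw141
        omega
      have hsum : x + y = x * (1 + w) := sum_factor hx0
      by_cases hwv4230 : w.val = 4230
      · left
        have hweq : w = ((4230 : ℕ) : F) := by rw [← valcast w, hwv4230]
        rw [hsum, hweq, n1_neg]
        ring
      · right
        obtain ⟨hne1, hne4230⟩ := (factB w.val (ZMod.val_lt w) hwv).resolve_left hwv4230
        have he0 : (1 : F) + w ≠ 0 := he0_of_ne w hwv4230
        have hz0 : x + y ≠ 0 := by rw [hsum]; exact mul_ne_zero hx0 he0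
        obtain ⟨t, ht⟩ := class_total _ hz0
        refine ⟨(t : ℤ), ⟨?_, ?_⟩, (Xc_mem _ _).mpr ⟨hz0, ht⟩⟩
        · intro heq
          have h1 : hF ^ ((t : ℕ) : ℤ) = hF ^ i := (hcls _ _).mpr heq
          have he141 : ((1 : F) + w) ^ 141 ≠ 1 := by
            rw [one_add_cast, ← Nat.cast_one (R := F)]
            exact natpow_ne (by omega)
          have h2 : hF ^ i * ((1 + w)) ^ 141 = hF ^ i * 1 := by
            calc hF ^ i * ((1 + w)) ^ 141 = x ^ 141 * ((1 + w)) ^ 141 := by rw [hx141]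
              _ = (x + y) ^ 141 := by rw [← mul_pow, ← hsum]
              _ = hF ^ i * 1 := by rw [ht, h1, mul_one]
          exact he141 (cancel_pow h2)
        · intro heq
          have h1 : hF ^ ((t : ℕ) : ℤ) = hF ^ (i + 15) := (hcls _ _).mpr heq
          have he4230 : ((1 : F) + w) ^ 141 ≠ ((4230 : ℕ) : F) := by
            rw [one_add_cast]
            exact natpow_ne (by omega)
          have h2 : hF ^ i * ((1 + w)) ^ 141 = hF ^ i * ((4230 : ℕ) : F) := by
            calc hF ^ i * ((1 + w)) ^ 141 = x ^ 141 * ((1 + w)) ^ 141 := by rw [hx141]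
              _ = (x + y) ^ 141 := by rw [← mul_pow, ← hsum]
              _ = hF ^ (i + 15) := by rw [ht, h1]
              _ = hF ^ i * ((4230 : ℕ) : F) := by rw [zpow_add₀ h_ne, h15]
          exact he4230 (cancel_pow h2)
    · rintro (rfl | ⟨j', ⟨hj1, hj2⟩, hzj⟩)
      · refine Set.mem_add.mpr ⟨gF ^ i, ?_, gF ^ i * ((4230 : ℕ) : F), ?_, ?_⟩
        · exact (Xc_mem _ _).mpr ⟨zpow_ne_zero _ g_ne, by rw [gpow141]⟩
        · refine (Xc_mem _ _).mpr ⟨mul_ne_zero (zpow_ne_zero _ g_ne) n1_ne, ?_⟩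
          rw [mul_pow, gpow141,
            natpow_eq (show (4230 : ℕ) ^ 141 % 4231 = 4230 % 4231 by decide),
            ← h15, ← zpow_add₀ h_ne]
        · rw [n1_neg]; ring
      · obtain ⟨hz0, hz141⟩ := (Xc_mem j' z).mp hzj
        exact cover i (i + 15) j' z hz0 hz141 (fun h => shift15 i h.1.symm)
          (fun h => by rcases h.2 with h' | h'; exacts [hj1 h', hj2 h'])
  · -- Goal 3
    intro i j hji hji15
    ext z
    simp only [Set.mem_compl_iff, Set.mem_singleton_iff]
    constructor
    · intro hz
      obtain ⟨x, hx, y, hy, rfl⟩ := Set.mem_add.mp hz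
      obtain ⟨hx0, hx141⟩ := (Xc_mem _ x).mp hx
      obtain ⟨hy0, hy141⟩ := (Xc_mem _ y).mp hy
      intro h0
      have hyx : y = -x := eq_neg_of_add_eq_zero_right h0
      have h1 : hF ^ j = -hF ^ i := by
        rw [← hy141, hyx, Odd.neg_pow ⟨70, by norm_num⟩, hx141]
      have h2 : hF ^ j = hF ^ (i + 15) := by
        rw [h1, zpow_add₀ h_ne, h15, n1_neg]
        ring
      exact hji15 ((hcls _ _).mp h2)
    · intro hz0
      obtain ⟨t, ht⟩ := class_total z hz0
      exact cover i j (t : ℤ) z hz0 ht (fun h => hji h.1) (fun h => hji15 h.1)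

/-- The cosets of the index-30 subgroup of `𝔽_4231ˣ` form a 15-color Directed
Ramsey algebra. -/
theorem stmt_14 : ∃ g : ZMod 4231, IsPrimitiveRoot g 4230 ∧
    (∀ i : ℤ, Xc 4231 30 g i + Xc 4231 30 g i =
      ⋃ j ∈ {j : ℤ | (j : ZMod 30) ≠ (i : ZMod 30)}, Xc 4231 30 g j) ∧
    (∀ i : ℤ, Xc 4231 30 g i + Xc 4231 30 g (i + 15) =
      {(0 : ZMod 4231)} ∪ ⋃ j ∈ {j : ℤ | (j : ZMod 30) ≠ (i : ZMod 30) ∧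
        (j : ZMod 30) ≠ ((i + 15 : ℤ) : ZMod 30)}, Xc 4231 30 g j) ∧
    (∀ i j : ℤ, (j : ZMod 30) ≠ (i : ZMod 30) → (j : ZMod 30) ≠ ((i + 15 : ℤ) : ZMod 30) →
      Xc 4231 30 g i + Xc 4231 30 g j = {(0 : ZMod 4231)}ᶜ) := by
  exact stmt_14'
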